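/- Let C be a bounded self-adjoint operator on a complex Hilbert space and T = A + iB (Cartesian decomposition) a bounded operator with T² = C. If σ(A) ∩ σ(-A) = ∅, then T is self-adjoint and invertible (in fact T = A). -/

import Mathlib

set_option synthInstance.maxHeartbeats 1000000
set_option maxHeartbeats 1000000

open ContinuousLinearMap in
lemma my_intertwine {H : Type*} [NormedAddCommGroup H] [InnerProductSpace ℂ H] [CompleteSpace H]
    (a b x : H →L[ℂ] H) (ha : IsSelfAdjoint a) (hb : IsSelfAdjoint b)
    (hx : a * x = x * b) (f : ℝ → ℝ) (hf : Continuous f) :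
    cfc f a * x = x * cfc f b := by
  set K : Set ℝ := spectrum ℝ a ∪ spectrum ℝ b with hKdef
  have hKa : spectrum ℝ a ⊆ K := Set.subset_union_left
  have hKb : spectrum ℝ b ⊆ K := Set.subset_union_right
  have : CompactSpace K := by
    rw [← isCompact_iff_compactSpace]
    exact (spectrum.isCompact a).union (spectrum.isCompact b)
  let ιa : C(spectrum ℝ a, K) := ⟨Set.inclusion hKa, continuous_inclusion hKa⟩
  let ιb : C(spectrum ℝ b, K) := ⟨Set.inclusion hKb, continuous_inclusion hKb⟩
  let φa : C(K, ℝ) →⋆ₐ[ℝ] (H →L[ℂ] H) := (cfcHom ha).comp (ιa.compStarAlgHom' ℝ ℝ)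
  let φb : C(K, ℝ) →⋆ₐ[ℝ] (H →L[ℂ] H) := (cfcHom hb).comp (ιb.compStarAlgHom' ℝ ℝ)
  have hφa : Continuous φa := (cfcHom_continuous ha).comp (ContinuousMap.continuous_precomp ιa)
  have hφb : Continuous φb := (cfcHom_continuous hb).comp (ContinuousMap.continuous_precomp ιb)
  have key : ∀ g : C(K, ℝ), φa g * x = x * φb g := by
    intro g
    induction g using ContinuousMap.induction_on_of_compact with
    | const r =>
      have h1 : (ContinuousMap.const K r) = algebraMap ℝ C(K, ℝ) r := rfl
      rw [h1, AlgHomClass.commutes, AlgHomClass.commutes]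
      exact Algebra.commutes r x
    | id =>
      have h1 : φa (ContinuousMap.restrict K (ContinuousMap.id ℝ)) = a := by
        show (cfcHom ha) _ = a
        convert cfcHom_id ha using 2
        ext z; rfl
      have h2 : φb (ContinuousMap.restrict K (ContinuousMap.id ℝ)) = b := by
        show (cfcHom hb) _ = b
        convert cfcHom_id hb using 2
        ext z; rfl
      rw [h1, h2]; exact hx
    | star_id =>
      have hs : star (ContinuousMap.restrict K (ContinuousMap.id ℝ))
          = ContinuousMap.restrict K (ContinuousMap.id ℝ) := by
        ext z; simp
      rw [hs]
      have h1 : φa (ContinuousMap.restrict K (ContinuousMap.id ℝ)) = a := by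
        show (cfcHom ha) _ = a
        convert cfcHom_id ha using 2
        ext z; rfl
      have h2 : φb (ContinuousMap.restrict K (ContinuousMap.id ℝ)) = b := by
        show (cfcHom hb) _ = b
        convert cfcHom_id hb using 2
        ext z; rfl
      rw [h1, h2]; exact hx
    | add f g hf hg => rw [map_add, map_add, add_mul, mul_add, hf, hg]
    | mul f g hf hg =>
      rw [map_mul, map_mul, mul_assoc, hg, ← mul_assoc, hf, mul_assoc]
    | frequently f hfreq =>
      have hcl : IsClosed {g : C(K, ℝ) | φa g * x = x * φb g} :=
        isClosed_eq (hφa.mul continuous_const) (continuous_const.mul hφb)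
      have : f ∈ closure {g : C(K, ℝ) | φa g * x = x * φb g} :=
        mem_closure_iff_frequently.mpr hfreq
      exact hcl.closure_subset this
  have := key (ContinuousMap.restrict K ⟨f, hf⟩)
  have ea : cfc f a = φa (ContinuousMap.restrict K ⟨f, hf⟩) := by
    rw [cfc_apply f a ha hf.continuousOn]
    congr 1
  have eb : cfc f b = φb (ContinuousMap.restrict K ⟨f, hf⟩) := by
    rw [cfc_apply f b hb hf.continuousOn]
    congr 1
  rw [ea, eb]
  exact this

open ContinuousLinearMap in
theorem sq_root_selfAdjoint_of_spectrum_re_disjoint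
    {H : Type*} [NormedAddCommGroup H] [InnerProductSpace ℂ H] [CompleteSpace H]
    (T A B C : H →L[ℂ] H) (hA : IsSelfAdjoint A) (hB : IsSelfAdjoint B)
    (hC : IsSelfAdjoint C) (hT : T = A + Complex.I • B) (hsq : T ^ 2 = C)
    (hspec : spectrum ℂ A ∩ spectrum ℂ (-A) = ∅) :
    IsSelfAdjoint T ∧ IsUnit T ∧ T = A := by
  -- Step 1: star T = A - I • B
  have hTstar : star T = A - Complex.I • B := by
    rw [hT, star_add, star_smul, hA.star_eq, hB.star_eq, Complex.star_def, Complex.conj_I,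
      neg_smul, sub_eq_add_neg]
  -- Step 2: (star T)^2 = T^2
  have h2 : star T ^ 2 = T ^ 2 := by
    rw [← star_pow, hsq, hC.star_eq]
  -- Step 3: A*B + B*A = 0
  have expand : ∀ ε : ℂ, (A + ε • B) * (A + ε • B)
      = A * A + ε • (A * B + B * A) + (ε * ε) • (B * B) := by
    intro ε
    simp only [mul_add, add_mul, smul_mul_assoc, mul_smul_comm, smul_smul, smul_add]
    abel
  have hS : A * B + B * A = 0 := by
    have h3 : (A + (-Complex.I) • B) * (A + (-Complex.I) • B)
        = (A + Complex.I • B) * (A + Complex.I • B) := by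
      have := h2
      rw [hTstar, hT, pow_two, pow_two, sub_eq_add_neg, ← neg_smul] at this
      exact this
    rw [expand, expand] at h3
    have h4 : ((2 : ℂ) * Complex.I) • (A * B + B * A) = 0 := by
      have hII : -Complex.I * -Complex.I = Complex.I * Complex.I := by ring
      rw [hII] at h3
      have h5 : (-Complex.I) • (A * B + B * A) = Complex.I • (A * B + B * A) :=
        add_left_cancel (add_right_cancel h3)
      have h6 : (Complex.I - -Complex.I) • (A * B + B * A) = 0 := by
        rw [sub_smul, h5, sub_self]
      have h7 : Complex.I - -Complex.I = 2 * Complex.I := by ring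
      rwa [h7] at h6
    have h2I : (2 : ℂ) * Complex.I ≠ 0 := by simp [Complex.I_ne_zero]
    exact (smul_eq_zero.mp h4).resolve_left h2I
  -- B = 0 via the intertwining lemma
  have hx : A * B = B * (-A) := by
    have h1 : A * B = -(B * A) := eq_neg_of_add_eq_zero_left hS
    rw [h1, mul_neg, neg_mul_eq_mul_neg]
  have hreal : Disjoint (spectrum ℝ (-A)) (spectrum ℝ A) := by
    rw [Set.disjoint_left]
    intro r h2 h1
    have e1 : (r : ℂ) ∈ spectrum ℂ A := by
      rw [spectrum.mem_iff] at h1 ⊢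
      rwa [show ((algebraMap ℂ (H →L[ℂ] H)) (r : ℂ)) = algebraMap ℝ (H →L[ℂ] H) r from
        (IsScalarTower.algebraMap_apply ℝ ℂ (H →L[ℂ] H) r).symm]
    have e2 : (r : ℂ) ∈ spectrum ℂ (-A) := by
      rw [spectrum.mem_iff] at h2 ⊢
      rwa [show ((algebraMap ℂ (H →L[ℂ] H)) (r : ℂ)) = algebraMap ℝ (H →L[ℂ] H) r from
        (IsScalarTower.algebraMap_apply ℝ ℂ (H →L[ℂ] H) r).symm]
    exact Set.eq_empty_iff_forall_notMem.mp hspec _ ⟨e1, e2⟩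
  obtain ⟨f, hf0, hf1, -⟩ := exists_continuous_zero_one_of_isClosed
    (spectrum.isCompact (-A)).isClosed (spectrum.isCompact A).isClosed hreal
  have hB0 : B = 0 := by
    have h1 : cfc (⇑f) A = 1 := by
      rw [cfc_congr (g := (1 : ℝ → ℝ)) hf1]
      exact cfc_one ℝ A
    have h2 : cfc (⇑f) (-A) = 0 := by
      rw [cfc_congr (g := (0 : ℝ → ℝ)) hf0]
      exact cfc_zero ℝ (-A)
    have key := my_intertwine A (-A) B hA hA.neg hx (⇑f) f.continuous
    rw [h1, h2, one_mul, mul_zero] at key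
    exact key
  have hTA : T = A := by rw [hT, hB0, smul_zero, add_zero]
  have hunit : IsUnit A := by
    rw [← spectrum.zero_notMem_iff ℂ]
    intro h0
    have h0' : (0 : ℂ) ∈ spectrum ℂ (-A) := by
      rw [← spectrum.neg_eq]
      simpa using Set.neg_mem_neg.mpr h0
    exact Set.eq_empty_iff_forall_notMem.mp hspec 0 ⟨h0, h0'⟩
  exact ⟨hTA ▸ hA, hTA ▸ hunit, hTA⟩
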